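/- arXiv:1806.01086 — 5 statements merged into one kernel-verified Lean document; each statement's English description precedes it below -/
import Mathlib

section
/- Let G be a connected Feynman graph with mass set E^M and external vertex set V^ext. Then the function s_G(γ) = 2h¹(γ) + δ^{mm}_γ on 2^{E_G} is supermodular, where δ^{mm}_γ = 1 if the edge subgraph γ is mass-momentum spanning and 0 otherwise. -/
open scoped Classical

/-- Signed incidence vector of an (oriented) edge `e`: head minus tail, in `ℚ^V`. -/
noncomputable def bd {V E : Type*} (ends : E → V × V) (e : E) : V → ℚ :=
  fun v => (if v = (ends e).1 then 1 else 0) - (if v = (ends e).2 then 1 else 0)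

/-- Rank function of the graphic matroid of the graph. -/
noncomputable def grank {V E : Type*} [Fintype E] (ends : E → V × V) (γ : Finset E) : ℕ :=
  Module.finrank ℚ (Submodule.span ℚ (bd ends '' ↑γ))

/-- First Betti number (cycle rank) of the edge subgraph on `γ`. -/
noncomputable def cycleRank {V E : Type*} [Fintype E] (ends : E → V × V)
    (γ : Finset E) : ℤ :=
  (γ.card : ℤ) - grank ends γ

/-- One step of adjacency through an edge of `γ`. -/
def step {V E : Type*} (ends : E → V × V) (γ : Finset E) (a b : V) : Prop :=
  ∃ e ∈ γ, ends e = (a, b) ∨ ends e = (b, a)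

/-- `a` and `b` lie in the same connected component of the edge subgraph `γ`. -/
def reach {V E : Type*} (ends : E → V × V) (γ : Finset E) (a b : V) : Prop :=
  Relation.EqvGen (step ends γ) a b

/-- `γ` is mass-momentum spanning: it contains all massive edges `EM` and all external
vertices `Vext` lie in a single connected component of the edge subgraph `γ`. -/
def mmSpanning {V E : Type*} (ends : E → V × V) (EM : Finset E) (Vext : Finset V)
    (γ : Finset E) : Prop :=
  EM ⊆ γ ∧ ∀ v ∈ Vext, ∀ w ∈ Vext, reach ends γ v w

/-- The set function `s_G(γ) = 2 h¹(γ) + δ^{mm}_γ` of a Feynman graph. -/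
noncomputable def sG {V E : Type*} [Fintype E] (ends : E → V × V) (EM : Finset E)
    (Vext : Finset V) (γ : Finset E) : ℤ :=
  2 * cycleRank ends γ + (if mmSpanning ends EM Vext γ then 1 else 0)

noncomputable def delta' {V : Type*} (v : V) : V → ℚ := fun u => if u = v then 1 else 0
lemma reach_mono {V E : Type*} (ends : E → V × V) {γ γ' : Finset E} (h : γ ⊆ γ')
    {a b : V} (hr : reach ends γ a b) : reach ends γ' a b :=
  Relation.EqvGen.mono (r := step ends γ) (p := step ends γ') (fun x y ⟨e, he, h2⟩ => ⟨e, h he, h2⟩) a b hr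
lemma mem_span_of_reach {V E : Type*} (ends : E → V × V) (γ : Finset E) {v w : V}
    (h : reach ends γ v w) :
    delta' v - delta' w ∈ Submodule.span ℚ (bd ends '' ↑γ) := by
  induction h with
  | rel a b hab =>
      obtain ⟨e, he, h2 | h2⟩ := hab
      · have hbd : bd ends e = delta' a - delta' b := by
          funext u; simp [bd, delta', h2]
        exact hbd ▸ Submodule.subset_span ⟨e, by simpa using he, rfl⟩
      · have hbd : bd ends e = delta' b - delta' a := by
          funext u; simp [bd, delta', h2]
        have hm : bd ends e ∈ Submodule.span ℚ (bd ends '' ↑γ) :=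
          Submodule.subset_span ⟨e, by simpa using he, rfl⟩
        have := Submodule.neg_mem _ hm
        rw [hbd] at this
        simpa using this
  | refl a => simp
  | symm a b _ ih =>
      have := Submodule.neg_mem _ ih
      simpa using this
  | trans a b c _ _ ih1 ih2 =>
      have := Submodule.add_mem _ ih1 ih2
      simpa using this
lemma not_mem_span_of_not_reach {V E : Type*} [Fintype V] (ends : E → V × V) (γ : Finset E)
    {v w : V} (h : ¬ reach ends γ v w) :
    delta' v - delta' w ∉ Submodule.span ℚ (bd ends '' ↑γ) := by
  classical
  set S : Finset V := Finset.univ.filter (fun u => reach ends γ v u) with hS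
  set φ : (V → ℚ) →ₗ[ℚ] ℚ :=
    { toFun := fun x => ∑ u ∈ S, x u
      map_add' := by intro x y; simp [Finset.sum_add_distrib]
      map_smul' := by intro c x; simp [Finset.mul_sum] }
  have hker : Submodule.span ℚ (bd ends '' ↑γ) ≤ LinearMap.ker φ := by
    rw [Submodule.span_le]
    rintro _ ⟨e, he, rfl⟩
    have hab : step ends γ (ends e).1 (ends e).2 := ⟨e, by simpa using he, Or.inl (by simp)⟩
    have hiff : reach ends γ v (ends e).1 ↔ reach ends γ v (ends e).2 :=
      ⟨fun h1 => Relation.EqvGen.trans _ _ _ h1 (Relation.EqvGen.rel _ _ hab),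
       fun h1 => Relation.EqvGen.trans _ _ _ h1
         (Relation.EqvGen.symm _ _ (Relation.EqvGen.rel _ _ hab))⟩
    have : φ (bd ends e) =
        (if (ends e).1 ∈ S then (1:ℚ) else 0) - (if (ends e).2 ∈ S then 1 else 0) := by
      simp only [φ, bd, LinearMap.coe_mk, AddHom.coe_mk, Finset.sum_sub_distrib,
        Finset.sum_ite_eq', Finset.sum_boole]
    have hmem : (ends e).1 ∈ S ↔ (ends e).2 ∈ S := by
      simp only [hS, Finset.mem_filter, Finset.mem_univ, true_and]
      exact hiff
    rw [SetLike.mem_coe, LinearMap.mem_ker, this]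
    by_cases h1 : (ends e).1 ∈ S
    · simp [h1, hmem.mp h1]
    · have h2 : (ends e).2 ∉ S := fun hh => h1 (hmem.mpr hh)
      simp [h1, h2]
  intro hmem
  have h0 : φ (delta' v - delta' w) = 0 := hker hmem
  have hv : v ∈ S := by
    simp only [hS, Finset.mem_filter, Finset.mem_univ, true_and]
    exact Relation.EqvGen.refl v
  have hw : w ∉ S := by
    simp only [hS, Finset.mem_filter, Finset.mem_univ, true_and]
    exact h
  have : φ (delta' v - delta' w) = 1 := by
    simp only [φ, delta', LinearMap.coe_mk, AddHom.coe_mk, Pi.sub_apply,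
      Finset.sum_sub_distrib, Finset.sum_ite_eq']
    simp [hv, hw]
  rw [this] at h0
  norm_num at h0
lemma span_union_eq {V E : Type*} [Fintype E] (ends : E → V × V) (I J : Finset E) :
    Submodule.span ℚ (bd ends '' ↑(I ∪ J)) =
      Submodule.span ℚ (bd ends '' ↑I) ⊔ Submodule.span ℚ (bd ends '' ↑J) := by
  rw [Finset.coe_union, Set.image_union, Submodule.span_union]
lemma grank_weak {V E : Type*} [Fintype V] [Fintype E] (ends : E → V × V) (I J : Finset E) :
    grank ends (I ∩ J) + grank ends (I ∪ J) ≤ grank ends I + grank ends J := by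
  classical
  have key := Submodule.finrank_sup_add_finrank_inf_eq
    (Submodule.span ℚ (bd ends '' ↑I)) (Submodule.span ℚ (bd ends '' ↑J))
  have hle : Submodule.span ℚ (bd ends '' ↑(I ∩ J)) ≤
      Submodule.span ℚ (bd ends '' ↑I) ⊓ Submodule.span ℚ (bd ends '' ↑J) :=
    le_inf (Submodule.span_mono (Set.image_mono (by simp [Finset.coe_inter])))
      (Submodule.span_mono (Set.image_mono (by simp [Finset.coe_inter])))
  have h1 : grank ends (I ∩ J) ≤ Module.finrank ℚ
      ((Submodule.span ℚ (bd ends '' ↑I)) ⊓ Submodule.span ℚ (bd ends '' ↑J) : Submodule ℚ (V → ℚ)) :=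
    Submodule.finrank_mono hle
  have h2 : grank ends (I ∪ J) = Module.finrank ℚ
      ((Submodule.span ℚ (bd ends '' ↑I)) ⊔ Submodule.span ℚ (bd ends '' ↑J) : Submodule ℚ (V → ℚ)) := by
    rw [grank, span_union_eq]
  unfold grank at *
  omega
lemma grank_strong {V E : Type*} [Fintype V] [Fintype E] (ends : E → V × V) (I J : Finset E)
    (x : V → ℚ) (hxI : x ∈ Submodule.span ℚ (bd ends '' ↑I))
    (hxJ : x ∈ Submodule.span ℚ (bd ends '' ↑J))
    (hx : x ∉ Submodule.span ℚ (bd ends '' ↑(I ∩ J))) :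
    grank ends (I ∩ J) + grank ends (I ∪ J) + 1 ≤ grank ends I + grank ends J := by
  classical
  have key := Submodule.finrank_sup_add_finrank_inf_eq
    (Submodule.span ℚ (bd ends '' ↑I)) (Submodule.span ℚ (bd ends '' ↑J))
  have hle : Submodule.span ℚ (bd ends '' ↑(I ∩ J)) <
      Submodule.span ℚ (bd ends '' ↑I) ⊓ Submodule.span ℚ (bd ends '' ↑J) := by
    refine lt_of_le_of_ne (le_inf (Submodule.span_mono (Set.image_mono (by simp [Finset.coe_inter])))
      (Submodule.span_mono (Set.image_mono (by simp [Finset.coe_inter])))) ?_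
    intro heq
    exact hx (heq ▸ Submodule.mem_inf.mpr ⟨hxI, hxJ⟩)
  have h1 : grank ends (I ∩ J) < Module.finrank ℚ
      ((Submodule.span ℚ (bd ends '' ↑I)) ⊓ Submodule.span ℚ (bd ends '' ↑J) : Submodule ℚ (V → ℚ)) :=
    Submodule.finrank_lt_finrank_of_lt hle
  have h2 : grank ends (I ∪ J) = Module.finrank ℚ
      ((Submodule.span ℚ (bd ends '' ↑I)) ⊔ Submodule.span ℚ (bd ends '' ↑J) : Submodule ℚ (V → ℚ)) := by
    rw [grank, span_union_eq]
  unfold grank at *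
  omega
lemma mmSpanning_mono {V E : Type*} (ends : E → V × V) (EM : Finset E) (Vext : Finset V)
    {γ γ' : Finset E} (h : γ ⊆ γ') (hm : mmSpanning ends EM Vext γ) :
    mmSpanning ends EM Vext γ' :=
  ⟨hm.1.trans h, fun v hv w hw => reach_mono ends h (hm.2 v hv w hw)⟩

/-- Let `G` be a connected Feynman graph with massive edges `EM` and external
vertices `Vext`.  Then `s_G(γ) = 2 h¹(γ) + δ^{mm}_γ` is supermodular on `2^{E_G}`. -/
theorem sG_supermodular {V E : Type*} [Fintype V] [Fintype E] (ends : E → V × V)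
    (EM : Finset E) (Vext : Finset V)
    (hconn : ∀ v w : V, reach ends Finset.univ v w) :
    ∀ I J : Finset E,
      sG ends EM Vext I + sG ends EM Vext J ≤
        sG ends EM Vext (I ∩ J) + sG ends EM Vext (I ∪ J) := by
  intro I J
  have hcard : ((I ∩ J).card : ℤ) + (I ∪ J).card = I.card + J.card := by
    exact_mod_cast congrArg (Nat.cast : ℕ → ℤ) (Finset.card_inter_add_card_union I J)
  have hweak : (grank ends (I ∩ J) : ℤ) + grank ends (I ∪ J) ≤ grank ends I + grank ends J := by
    exact_mod_cast grank_weak ends I J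
  by_cases hKey : mmSpanning ends EM Vext I ∧ mmSpanning ends EM Vext J ∧
      ¬ mmSpanning ends EM Vext (I ∩ J)
  · obtain ⟨hI, hJ, hIJ⟩ := hKey
    have hU : mmSpanning ends EM Vext (I ∪ J) :=
      mmSpanning_mono ends EM Vext Finset.subset_union_left hI
    have hEM : EM ⊆ I ∩ J := Finset.subset_inter hI.1 hJ.1
    have hvw : ∃ v ∈ Vext, ∃ w ∈ Vext, ¬ reach ends (I ∩ J) v w := by
      by_contra hc
      push_neg at hc
      exact hIJ ⟨hEM, hc⟩
    obtain ⟨v, hv, w, hw, hnr⟩ := hvw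
    have hstrong : (grank ends (I ∩ J) : ℤ) + grank ends (I ∪ J) + 1 ≤
        grank ends I + grank ends J := by
      exact_mod_cast grank_strong ends I J (delta' v - delta' w)
        (mem_span_of_reach ends I (hI.2 v hv w hw))
        (mem_span_of_reach ends J (hJ.2 v hv w hw))
        (not_mem_span_of_not_reach ends (I ∩ J) hnr)
    simp only [sG, cycleRank, if_pos hI, if_pos hJ, if_neg hIJ, if_pos hU]
    linarith
  · have hdelta : (if mmSpanning ends EM Vext I then (1:ℤ) else 0) +
        (if mmSpanning ends EM Vext J then 1 else 0) ≤
        (if mmSpanning ends EM Vext (I ∩ J) then 1 else 0) +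
        (if mmSpanning ends EM Vext (I ∪ J) then 1 else 0) := by
      by_cases hI : mmSpanning ends EM Vext I
      · have hU : mmSpanning ends EM Vext (I ∪ J) :=
          mmSpanning_mono ends EM Vext Finset.subset_union_left hI
        by_cases hJ : mmSpanning ends EM Vext J
        · have hIJ : mmSpanning ends EM Vext (I ∩ J) := by tauto
          simp [hI, hJ, hIJ, hU]
        · simp only [if_pos hI, if_neg hJ, if_pos hU]
          split_ifs <;> norm_num
      · by_cases hJ : mmSpanning ends EM Vext J
        · have hU : mmSpanning ends EM Vext (I ∪ J) :=
            mmSpanning_mono ends EM Vext Finset.subset_union_right hJ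
          simp only [if_neg hI, if_pos hJ, if_pos hU]
          split_ifs <;> norm_num
        · simp only [if_neg hI, if_neg hJ]
          split_ifs <;> norm_num
    simp only [sG, cycleRank]
    linarith
end

section
/- Let E be a finite set. A collection 𝒢 ⊆ 2^E \ {∅, E} is a building set of the lattice 2^E \ {E} (i.e., for every I ⊊ E, the maximal elements of {J ∈ 𝒢 ∪ {{i}} : J ⊆ I} partition I) if and only if 𝒢 together with all singletons satisfies: {i} ∈ 𝒢 for all i (after adjoining singletons), and for all I₁, I₂ ∈ 𝒢 with I₁ ∩ I₂ ≠ ∅, either I₁ ∪ I₂ ∈ 𝒢 or I₁ ∪ I₂ = E. -/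
private lemma exists_maximal_ext {α : Type*} [DecidableEq α] [Fintype α]
    (𝒢 : Finset (Finset α)) (I K : Finset α)
    (hK : K ∈ 𝒢 ∨ ∃ a, K = {a}) (hKI : K ⊆ I) :
    ∃ J : Finset α, (J ∈ 𝒢 ∨ ∃ a, J = {a}) ∧ K ⊆ J ∧ J ⊆ I ∧
      ∀ J' : Finset α, (J' ∈ 𝒢 ∨ ∃ a, J' = {a}) → J' ⊆ I → J ⊆ J' → J = J' := by
  classical
  set S : Finset (Finset α) :=
    (𝒢 ∪ Finset.univ.image fun a => ({a} : Finset α)).filter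
      (fun J => K ⊆ J ∧ J ⊆ I) with hS
  have hmem : ∀ J, J ∈ S ↔ (J ∈ 𝒢 ∨ ∃ a, J = {a}) ∧ K ⊆ J ∧ J ⊆ I := by
    intro J
    simp only [hS, Finset.mem_filter, Finset.mem_union, Finset.mem_image,
      Finset.mem_univ, true_and]
    constructor
    · rintro ⟨h1 | ⟨a, ha⟩, h2⟩
      · exact ⟨Or.inl h1, h2⟩
      · exact ⟨Or.inr ⟨a, ha.symm⟩, h2⟩
    · rintro ⟨h1 | ⟨a, ha⟩, h2⟩
      · exact ⟨Or.inl h1, h2⟩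
      · exact ⟨Or.inr ⟨a, ha.symm⟩, h2⟩
  have hKS : K ∈ S := (hmem K).2 ⟨hK, le_refl _, hKI⟩
  obtain ⟨J, hJS, hmax⟩ := Finset.exists_maximal (s := S) ⟨K, hKS⟩
  obtain ⟨hJG, hKJ, hJI⟩ := (hmem J).1 hJS
  refine ⟨J, hJG, hKJ, hJI, ?_⟩
  intro J' hJ'G hJ'I hJJ'
  by_contra hne
  exact hne (le_antisymm hJJ' (hmax ((hmem J').2 ⟨hJ'G, hKJ.trans hJJ', hJ'I⟩) hJJ'))

/-- Let `E` be a finite set and `𝒢 ⊆ 2^E \ {∅, E}`.  Write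
`𝒢' = 𝒢 ∪ {singletons}`.  Then `𝒢` is a building set of the lattice `2^E \ {E}` — i.e.
for every `I ⊊ E` the maximal elements of `{J ∈ 𝒢' : J ⊆ I}` partition `I` (each `i ∈ I`
lies in a unique maximal element) — if and only if for all `I₁, I₂ ∈ 𝒢'` with
`I₁ ∩ I₂ ≠ ∅`, either `I₁ ∪ I₂ ∈ 𝒢'` or `I₁ ∪ I₂ = E`. -/
theorem building_set_iff {α : Type*} [DecidableEq α] [Fintype α]
    (𝒢 : Finset (Finset α))
    (hne : ∀ I ∈ 𝒢, I ≠ ∅) (hproper : ∀ I ∈ 𝒢, I ≠ Finset.univ) :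
    (∀ I : Finset α, I ⊂ Finset.univ → ∀ i ∈ I,
        ∃! J : Finset α,
          ((J ∈ 𝒢 ∨ ∃ a, J = {a}) ∧ J ⊆ I ∧
            ∀ J' : Finset α, (J' ∈ 𝒢 ∨ ∃ a, J' = {a}) → J' ⊆ I → J ⊆ J' → J = J') ∧
          i ∈ J) ↔
      (∀ I₁ : Finset α, (I₁ ∈ 𝒢 ∨ ∃ a, I₁ = {a}) →
        ∀ I₂ : Finset α, (I₂ ∈ 𝒢 ∨ ∃ a, I₂ = {a}) →
        (I₁ ∩ I₂).Nonempty →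
        ((I₁ ∪ I₂ ∈ 𝒢 ∨ ∃ a, I₁ ∪ I₂ = {a}) ∨ I₁ ∪ I₂ = Finset.univ)) := by
  classical
  constructor
  · intro h I₁ hI₁ I₂ hI₂ hinter
    by_cases hU : I₁ ∪ I₂ = Finset.univ
    · exact Or.inr hU
    · left
      set I : Finset α := I₁ ∪ I₂ with hI
      have hIss : I ⊂ Finset.univ := lt_of_le_of_ne (Finset.subset_univ I) hU
      obtain ⟨i, hi⟩ := hinter
      have hi1 : i ∈ I₁ := (Finset.mem_inter.1 hi).1
      have hi2 : i ∈ I₂ := (Finset.mem_inter.1 hi).2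
      obtain ⟨J₁, hJ₁G, hI₁J₁, hJ₁I, hmax₁⟩ :=
        exists_maximal_ext 𝒢 I I₁ hI₁ Finset.subset_union_left
      obtain ⟨J₂, hJ₂G, hI₂J₂, hJ₂I, hmax₂⟩ :=
        exists_maximal_ext 𝒢 I I₂ hI₂ Finset.subset_union_right
      obtain ⟨J, hJ, huniq⟩ := h I hIss i (Finset.mem_union_left _ hi1)
      have e1 : J₁ = J := huniq J₁ ⟨⟨hJ₁G, hJ₁I, hmax₁⟩, hI₁J₁ hi1⟩
      have e2 : J₂ = J := huniq J₂ ⟨⟨hJ₂G, hJ₂I, hmax₂⟩, hI₂J₂ hi2⟩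
      have hJeq : J = I := by
        apply Finset.Subset.antisymm (e1 ▸ hJ₁I)
        exact Finset.union_subset (e1 ▸ hI₁J₁) (e2 ▸ hI₂J₂)
      rw [← hJeq, ← e1]; exact hJ₁G
  · intro h I hIss i hiI
    obtain ⟨J, hJG, hiJ, hJI, hmax⟩ :=
      exists_maximal_ext 𝒢 I {i} (Or.inr ⟨i, rfl⟩) (Finset.singleton_subset_iff.2 hiI)
    refine ⟨J, ⟨⟨hJG, hJI, hmax⟩, hiJ (Finset.mem_singleton_self i)⟩, ?_⟩
    rintro J' ⟨⟨hJ'G, hJ'I, hmax'⟩, hiJ'⟩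
    have hinter : (J' ∩ J).Nonempty :=
      ⟨i, Finset.mem_inter.2 ⟨hiJ', hiJ (Finset.mem_singleton_self i)⟩⟩
    have hUI : J' ∪ J ⊆ I := Finset.union_subset hJ'I hJI
    have hUne : J' ∪ J ≠ Finset.univ := by
      intro hu
      exact hIss.ne (Finset.Subset.antisymm hIss.subset (hu ▸ hUI))
    have hUG : J' ∪ J ∈ 𝒢 ∨ ∃ a, J' ∪ J = {a} :=
      (h J' hJ'G J hJG hinter).resolve_right hUne
    have e1 : J' = J' ∪ J := hmax' (J' ∪ J) hUG hUI Finset.subset_union_left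
    have e2 : J = J' ∪ J := hmax (J' ∪ J) hUG hUI Finset.subset_union_right
    exact e1.trans e2.symm
end

section
/- Let 𝒢 ⊆ 2^E \ {E} be a building set containing all singletons. A subset 𝒩 ⊆ 𝒢 is nested if and only if: (1) any two elements of 𝒩 are either disjoint or comparable by inclusion, and (2) for any k ≥ 2 pairwise disjoint elements I₁,…,I_k ∈ 𝒩, the union ⋃ I_j is not in 𝒢 ∪ {E}. -/
/-- Let `𝒢 ⊆ 2^E \ {E}` be a building set containing all singletons (so
`∅ ∉ 𝒢`, `E ∉ 𝒢`, `{i} ∈ 𝒢` for all `i`, and for intersecting `I₁, I₂ ∈ 𝒢` either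
`I₁ ∪ I₂ ∈ 𝒢` or `I₁ ∪ I₂ = E`).  A subset `𝒩 ⊆ 𝒢` is nested — i.e. for every subfamily
of `k ≥ 2` pairwise incomparable elements of `𝒩` the join exists in `2^E \ {E}` (the
union is not `E`) and is not in `𝒢` — if and only if (1) any two elements of `𝒩` are
disjoint or comparable, and (2) for every subfamily of `k ≥ 2` pairwise disjoint elements
of `𝒩`, the union is not in `𝒢 ∪ {E}`. -/
theorem nested_set_iff {α : Type*} [DecidableEq α] [Fintype α]
    (𝒢 : Finset (Finset α))
    (hne : ∀ I ∈ 𝒢, I ≠ ∅) (hproper : ∀ I ∈ 𝒢, I ≠ Finset.univ)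
    (hsingle : ∀ a : α, {a} ∈ 𝒢)
    (hbuild : ∀ I₁ ∈ 𝒢, ∀ I₂ ∈ 𝒢, (I₁ ∩ I₂).Nonempty →
      I₁ ∪ I₂ ∈ 𝒢 ∨ I₁ ∪ I₂ = Finset.univ)
    (𝒩 : Finset (Finset α)) (h𝒩 : 𝒩 ⊆ 𝒢) :
    (∀ F ⊆ 𝒩, 2 ≤ F.card →
        (∀ A ∈ F, ∀ B ∈ F, A ≠ B → ¬ A ⊆ B ∧ ¬ B ⊆ A) →
        F.sup id ≠ Finset.univ ∧ F.sup id ∉ 𝒢) ↔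
      ((∀ A ∈ 𝒩, ∀ B ∈ 𝒩, A ∩ B = ∅ ∨ A ⊆ B ∨ B ⊆ A) ∧
        (∀ F ⊆ 𝒩, 2 ≤ F.card →
          (∀ A ∈ F, ∀ B ∈ F, A ≠ B → A ∩ B = ∅) →
          F.sup id ∉ 𝒢 ∧ F.sup id ≠ Finset.univ)) := by
  constructor
  · intro hnest
    constructor
    · intro A hA B hB
      by_contra hcon
      push_neg at hcon
      obtain ⟨hAB, hnAB, hnBA⟩ := hcon
      have hne' : A ≠ B := by rintro rfl; exact hnAB (subset_refl A)
      have hF : ({A, B} : Finset (Finset α)) ⊆ 𝒩 := by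
        intro x hx
        simp only [Finset.mem_insert, Finset.mem_singleton] at hx
        rcases hx with rfl | rfl <;> assumption
      have hcard : ({A, B} : Finset (Finset α)).card = 2 := Finset.card_pair hne'
      have hinc : ∀ X ∈ ({A, B} : Finset (Finset α)), ∀ Y ∈ ({A, B} : Finset (Finset α)),
          X ≠ Y → ¬ X ⊆ Y ∧ ¬ Y ⊆ X := by
        intro X hX Y hY hXY
        simp only [Finset.mem_insert, Finset.mem_singleton] at hX hY
        rcases hX with rfl | rfl <;> rcases hY with rfl | rfl <;>
          first | exact absurd rfl hXY | exact ⟨hnAB, hnBA⟩ | exact ⟨hnBA, hnAB⟩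
      obtain ⟨hu, hg⟩ := hnest {A, B} hF (by omega) hinc
      have hsup : ({A, B} : Finset (Finset α)).sup id = A ∪ B := by
        simp [Finset.sup_insert, Finset.sup_singleton]
      rw [hsup] at hu hg
      rcases hbuild A (h𝒩 hA) B (h𝒩 hB) hAB with h | h
      · exact hg h
      · exact hu h
    · intro F hF hcard hdisj
      have hinc : ∀ A ∈ F, ∀ B ∈ F, A ≠ B → ¬ A ⊆ B ∧ ¬ B ⊆ A := by
        intro A hA B hB hABne
        constructor
        · intro hsub
          have hA' := hne A (h𝒩 (hF hA))
          have : A ∩ B = A := Finset.inter_eq_left.2 hsub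
          rw [hdisj A hA B hB hABne] at this
          exact hA' this.symm
        · intro hsub
          have hB' := hne B (h𝒩 (hF hB))
          have : A ∩ B = B := Finset.inter_eq_right.2 hsub
          rw [hdisj A hA B hB hABne] at this
          exact hB' this.symm
      obtain ⟨hu, hg⟩ := hnest F hF hcard hinc
      exact ⟨hg, hu⟩
  · rintro ⟨h1, h2⟩ F hF hcard hinc
    have hdisj : ∀ A ∈ F, ∀ B ∈ F, A ≠ B → A ∩ B = ∅ := by
      intro A hA B hB hABne
      rcases h1 A (hF hA) B (hF hB) with h | h | h
      · exact h
      · exact absurd h (hinc A hA B hB hABne).1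
      · exact absurd h (hinc A hA B hB hABne).2
    obtain ⟨hg, hu⟩ := h2 F hF hcard hdisj
    exact ⟨hu, hg⟩
end

section
/- Let G be a connected Feynman graph with generic euclidean kinematics and γ ⊆ E_G an edge subgraph with connected components γ₀,…,γ_k. The lowest-degree part of the first Symanzik polynomial ψ_G in the variables (α_e)_{e∈γ} has degree h¹(γ), and equals ψ_γ · ψ_{G/γ}; moreover the remainder R^ψ_{G|γ} = ψ_G − ψ_γ ψ_{G/γ} vanishes if and only if for every spanning tree T of G, each intersection T ∩ γᵢ is connected. -/
open scoped Classical

/-- The first Symanzik polynomial `ψ_G = ∑_T ∏_{e ∉ T} α_e`, summing over spanning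
trees. -/
noncomputable def psiG {V E : Type*} [Fintype V] [Fintype E] (ends : E → V × V) :
    MvPolynomial E ℝ :=
  ∑ T ∈ Finset.univ.filter (fun T : Finset E =>
      grank ends T = grank ends Finset.univ ∧ T.card = grank ends Finset.univ),
    ∏ e ∈ Finset.univ \ T, MvPolynomial.X e

/-- `ψ_γ = ∏ᵢ ψ_{γᵢ} = ∑_F ∏_{e ∈ γ \ F} α_e`, summing over maximal forests `F` of the
edge subgraph `γ`. -/
noncomputable def psiSub {V E : Type*} [Fintype E] (ends : E → V × V) (γ : Finset E) :
    MvPolynomial E ℝ :=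
  ∑ F ∈ Finset.univ.filter (fun F : Finset E =>
      F ⊆ γ ∧ grank ends F = grank ends γ ∧ F.card = grank ends γ),
    ∏ e ∈ γ \ F, MvPolynomial.X e

/-- `ψ_{G/γ} = ∑_S ∏_{e ∈ (E \ γ) \ S} α_e`, summing over spanning trees `S` of the
quotient graph `G/γ`. -/
noncomputable def psiQuot {V E : Type*} [Fintype E] (ends : E → V × V) (γ : Finset E) :
    MvPolynomial E ℝ :=
  ∑ S ∈ Finset.univ.filter (fun S : Finset E =>
      S ⊆ Finset.univ \ γ ∧ grank ends (γ ∪ S) = grank ends Finset.univ ∧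
        S.card + grank ends γ = grank ends Finset.univ),
    ∏ e ∈ (Finset.univ \ γ) \ S, MvPolynomial.X e

set_option linter.unusedSectionVars false
set_option linter.unusedVariables false

section aux
variable {V E : Type*} [Fintype V] [Fintype E] (ends : E → V × V)

noncomputable def sp (A : Finset E) : Submodule ℚ (V → ℚ) := Submodule.span ℚ (bd ends '' ↑A)

lemma grank_eq (A : Finset E) : grank ends A = Module.finrank ℚ (sp ends A) := rfl

lemma sp_union (A B : Finset E) : sp ends (A ∪ B) = sp ends A ⊔ sp ends B := by
  rw [sp, Finset.coe_union, Set.image_union, Submodule.span_union]; rfl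

lemma sp_mono {A B : Finset E} (h : A ⊆ B) : sp ends A ≤ sp ends B :=
  Submodule.span_mono (Set.image_mono (by exact_mod_cast h))

lemma grank_mono {A B : Finset E} (h : A ⊆ B) : grank ends A ≤ grank ends B :=
  Submodule.finrank_mono (sp_mono ends h)

lemma grank_le_card (A : Finset E) : grank ends A ≤ A.card := by
  have h : bd ends '' ↑A = ↑(A.image (bd ends)) := (Finset.coe_image).symm
  rw [grank, h]
  exact le_trans (finrank_span_finset_le_card _) Finset.card_image_le

lemma grank_union_le (A B : Finset E) :
    grank ends (A ∪ B) ≤ grank ends A + grank ends B := by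
  rw [grank_eq, grank_eq, grank_eq, sp_union]
  have := Submodule.finrank_sup_add_finrank_inf_eq (sp ends A) (sp ends B)
  omega

lemma grank_subset_card {A T : Finset E} (hAT : A ⊆ T) (hT : grank ends T = T.card) :
    grank ends A = A.card := by
  have h1 := grank_le_card ends A
  have h2 := grank_le_card ends (T \ A)
  have h3 : grank ends T ≤ grank ends A + grank ends (T \ A) := by
    have h := grank_union_le ends A (T \ A)
    rwa [Finset.union_sdiff_of_subset hAT] at h
  have h4 := Finset.card_sdiff_add_card_eq_card hAT
  omega

lemma sp_eq_of_subset {A B : Finset E} (h : A ⊆ B) (hr : grank ends A = grank ends B) :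
    sp ends A = sp ends B :=
  Submodule.eq_of_le_of_finrank_eq (sp_mono ends h) hr

lemma rank_glue (γ : Finset E) {F : Finset E} (S : Finset E) (hF : F ⊆ γ)
    (hrF : grank ends F = grank ends γ) :
    grank ends (F ∪ S) = grank ends (γ ∪ S) := by
  rw [grank_eq, grank_eq, sp_union, sp_union, sp_eq_of_subset ends hF hrF]

end aux

section momo
variable {E : Type*}

noncomputable def momo (s : Finset E) : E →₀ ℕ := ∑ e ∈ s, Finsupp.single e 1

lemma prod_X_eq (s : Finset E) : (∏ e ∈ s, (MvPolynomial.X e : MvPolynomial E ℝ)) =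
    MvPolynomial.monomial (momo s) 1 := by
  rw [momo, MvPolynomial.monomial_sum_one]
  exact Finset.prod_congr rfl fun e _ => rfl

lemma momo_apply (s : Finset E) (e : E) : momo s e = if e ∈ s then 1 else 0 := by
  rw [momo]
  rw [Finsupp.finset_sum_apply]
  simp only [Finsupp.single_apply]
  exact Finset.sum_ite_eq' s e (fun _ => 1)

lemma momo_inj {s t : Finset E} (h : momo s = momo t) : s = t := by
  ext e
  have he := DFunLike.congr_fun h e
  rw [momo_apply, momo_apply] at he
  by_cases hs : e ∈ s <;> by_cases ht : e ∈ t <;> simp [hs, ht] at he ⊢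

lemma sum_momo (γ s : Finset E) : ∑ e ∈ γ, momo s e = (γ ∩ s).card := by
  simp only [momo_apply]
  rw [Finset.sum_ite_mem]
  simp



end momo



section main
variable {V E : Type*} [Fintype V] [Fintype E] (ends : E → V × V) (γ : Finset E)

lemma prod_psi_eq :
    psiSub ends γ * psiQuot ends γ =
    ∑ T ∈ (Finset.univ.filter (fun T : Finset E =>
        grank ends T = grank ends Finset.univ ∧ T.card = grank ends Finset.univ)).filter
        (fun T => grank ends (T ∩ γ) = grank ends γ),
      ∏ e ∈ Finset.univ \ T, MvPolynomial.X e := by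
  unfold psiSub psiQuot
  rw [Finset.sum_mul_sum, ← Finset.sum_product']
  refine Finset.sum_nbij' (fun p => p.1 ∪ p.2) (fun T => (T ∩ γ, T \ γ)) ?_ ?_ ?_ ?_ ?_
  · rintro ⟨F, S⟩ hp
    rw [Finset.mem_product, Finset.mem_filter, Finset.mem_filter] at hp
    obtain ⟨⟨-, hF, hrF, hcF⟩, -, hS, hrS, hcS⟩ := hp
    dsimp only at hF hrF hcF hS hrS hcS ⊢
    have hSγ : ∀ e ∈ S, e ∉ γ := fun e he => (Finset.mem_sdiff.mp (hS he)).2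
    have hFS1 : (F ∪ S) ∩ γ = F := by
      ext e
      simp only [Finset.mem_inter, Finset.mem_union]
      have h1 : e ∈ F → e ∈ γ := fun h => hF h
      have h2 : e ∈ S → e ∉ γ := hSγ e
      tauto
    have hdisj : Disjoint F S :=
      Finset.disjoint_left.mpr fun e heF heS => hSγ e heS (hF heF)
    simp only [Finset.mem_filter, Finset.mem_univ, true_and, hFS1]
    refine ⟨⟨?_, ?_⟩, hrF⟩
    · rw [rank_glue ends γ S hF hrF]; exact hrS
    · rw [Finset.card_union_of_disjoint hdisj]; omega
  · intro T hT
    rw [Finset.mem_filter, Finset.mem_filter] at hT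
    obtain ⟨⟨-, hrT, hcT⟩, hTγ⟩ := hT
    have hTT : grank ends T = T.card := by rw [hrT, hcT]
    have hcTγ : (T ∩ γ).card = grank ends γ := by
      rw [← hTγ]; exact (grank_subset_card ends Finset.inter_subset_left hTT).symm
    have hglue : T ∩ γ ∪ T \ γ = T := by
      ext e; simp only [Finset.mem_union, Finset.mem_inter, Finset.mem_sdiff]; tauto
    rw [Finset.mem_product, Finset.mem_filter, Finset.mem_filter]
    dsimp only
    refine ⟨⟨Finset.mem_univ _, Finset.inter_subset_right, hTγ, hcTγ⟩,
      Finset.mem_univ _, ?_, ?_, ?_⟩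
    · exact Finset.sdiff_subset_sdiff (Finset.subset_univ T) le_rfl
    · rw [← rank_glue ends γ (T \ γ) Finset.inter_subset_right hTγ, hglue]; exact hrT
    · have := Finset.card_inter_add_card_sdiff T γ
      omega
  · rintro ⟨F, S⟩ hp
    rw [Finset.mem_product, Finset.mem_filter, Finset.mem_filter] at hp
    obtain ⟨⟨-, hF, -, -⟩, -, hS, -, -⟩ := hp
    dsimp only at hF hS ⊢
    have hSγ : ∀ e ∈ S, e ∉ γ := fun e he => (Finset.mem_sdiff.mp (hS he)).2
    have e1 : (F ∪ S) ∩ γ = F := by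
      ext e
      simp only [Finset.mem_inter, Finset.mem_union]
      have h1 : e ∈ F → e ∈ γ := fun h => hF h
      have h2 : e ∈ S → e ∉ γ := hSγ e
      tauto
    have e2 : (F ∪ S) \ γ = S := by
      ext e
      simp only [Finset.mem_sdiff, Finset.mem_union]
      have h1 : e ∈ F → e ∈ γ := fun h => hF h
      have h2 : e ∈ S → e ∉ γ := hSγ e
      tauto
    rw [e1, e2]
  · intro T hT
    dsimp only
    ext e; simp only [Finset.mem_union, Finset.mem_inter, Finset.mem_sdiff]; tauto
  · rintro ⟨F, S⟩ hp
    rw [Finset.mem_product, Finset.mem_filter, Finset.mem_filter] at hp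
    obtain ⟨⟨-, hF, -, -⟩, -, hS, -, -⟩ := hp
    dsimp only at hF hS ⊢
    have hSγ : ∀ e ∈ S, e ∉ γ := fun e he => (Finset.mem_sdiff.mp (hS he)).2
    have hdisj : Disjoint (γ \ F) ((Finset.univ \ γ) \ S) := by
      rw [Finset.disjoint_left]
      intro e h1 h2
      exact (Finset.mem_sdiff.mp (Finset.mem_sdiff.mp h2).1).2 (Finset.mem_sdiff.mp h1).1
    rw [← Finset.prod_union hdisj]
    refine Finset.prod_congr ?_ fun _ _ => rfl
    ext e
    simp only [Finset.mem_union, Finset.mem_sdiff, Finset.mem_univ, true_and]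
    have h1 : e ∈ F → e ∈ γ := fun h => hF h
    have h2 : e ∈ S → e ∉ γ := hSγ e
    tauto

end main

/-- Let `G` be a connected graph and `γ ⊆ E_G` an edge subgraph with
components `γ₀, …, γ_k`.  Writing `ψ_G = ψ_γ ψ_{G/γ} + R^ψ_{G|γ}`, every monomial of
`ψ_γ ψ_{G/γ}` has degree exactly `h¹(γ) = |γ| − r(γ)` in the variables `(α_e)_{e ∈ γ}`
and every monomial of the remainder `R^ψ_{G|γ}` has strictly larger degree in these
variables (so the lowest-degree part of `ψ_G` has degree `h¹(γ)` and equals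
`ψ_γ ψ_{G/γ}`); moreover `R^ψ_{G|γ} = 0` iff for every spanning tree `T` of `G` the
intersection `T ∩ γ` is a maximal forest of `γ`, i.e. each `T ∩ γᵢ` is connected
(a spanning tree of `γᵢ`). -/
theorem symanzik_factorization {V E : Type*} [Fintype V] [Fintype E] [Nonempty V]
    (ends : E → V × V)
    (hconn : grank ends Finset.univ + 1 = Fintype.card V)
    (γ : Finset E) :
    (∀ d ∈ (psiSub ends γ * psiQuot ends γ).support,
        ((∑ e ∈ γ, d e : ℕ) : ℤ) = (γ.card : ℤ) - grank ends γ) ∧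
      (∀ d ∈ (psiG ends - psiSub ends γ * psiQuot ends γ).support,
        (γ.card : ℤ) - grank ends γ < ((∑ e ∈ γ, d e : ℕ) : ℤ)) ∧
      (psiG ends - psiSub ends γ * psiQuot ends γ = 0 ↔
        ∀ T : Finset E,
          grank ends T = grank ends Finset.univ → T.card = grank ends Finset.univ →
          grank ends (T ∩ γ) = grank ends γ) := by
  have hγT : ∀ s : Finset E, γ ∩ (Finset.univ \ s) = γ \ s := by
    intro s; ext e; simp
  have hsplit : psiG ends - psiSub ends γ * psiQuot ends γ =
      ∑ T ∈ (Finset.univ.filter (fun T : Finset E =>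
          grank ends T = grank ends Finset.univ ∧ T.card = grank ends Finset.univ)).filter
          (fun T => ¬ grank ends (T ∩ γ) = grank ends γ),
        ∏ e ∈ Finset.univ \ T, MvPolynomial.X e := by
    rw [prod_psi_eq ends γ]
    unfold psiG
    rw [← Finset.sum_filter_add_sum_filter_not (Finset.univ.filter (fun T : Finset E =>
        grank ends T = grank ends Finset.univ ∧ T.card = grank ends Finset.univ))
        (fun T => grank ends (T ∩ γ) = grank ends γ)]
    rw [add_sub_cancel_left]
  refine ⟨?_, ?_, ?_⟩
  · intro d hd
    rw [prod_psi_eq ends γ] at hd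
    obtain ⟨T, hT, hdT⟩ := Finset.mem_biUnion.mp (MvPolynomial.support_sum hd)
    rw [prod_X_eq, MvPolynomial.support_monomial, if_neg one_ne_zero,
      Finset.mem_singleton] at hdT
    subst hdT
    rw [Finset.mem_filter, Finset.mem_filter] at hT
    obtain ⟨⟨-, hrT, hcT⟩, hTγ⟩ := hT
    have hTT : grank ends T = T.card := by rw [hrT, hcT]
    have hcTγ : (T ∩ γ).card = grank ends γ := by
      rw [← hTγ]; exact (grank_subset_card ends Finset.inter_subset_left hTT).symm
    rw [sum_momo, hγT]
    have hc := Finset.card_inter_add_card_sdiff γ T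
    rw [Finset.inter_comm] at hc
    omega
  · intro d hd
    rw [hsplit] at hd
    obtain ⟨T, hT, hdT⟩ := Finset.mem_biUnion.mp (MvPolynomial.support_sum hd)
    rw [prod_X_eq, MvPolynomial.support_monomial, if_neg one_ne_zero,
      Finset.mem_singleton] at hdT
    subst hdT
    rw [Finset.mem_filter, Finset.mem_filter] at hT
    obtain ⟨⟨-, hrT, hcT⟩, hTγ⟩ := hT
    have hTT : grank ends T = T.card := by rw [hrT, hcT]
    have hcTγ : (T ∩ γ).card = grank ends (T ∩ γ) :=
      (grank_subset_card ends Finset.inter_subset_left hTT).symm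
    have hle : grank ends (T ∩ γ) ≤ grank ends γ :=
      grank_mono ends Finset.inter_subset_right
    rw [sum_momo, hγT]
    have hc := Finset.card_inter_add_card_sdiff γ T
    rw [Finset.inter_comm] at hc
    omega
  · rw [hsplit]
    constructor
    · intro h0 T hrT hcT
      by_contra hq
      have hmem : T ∈ (Finset.univ.filter (fun T : Finset E =>
          grank ends T = grank ends Finset.univ ∧ T.card = grank ends Finset.univ)).filter
          (fun T => ¬ grank ends (T ∩ γ) = grank ends γ) :=
        Finset.mem_filter.mpr ⟨Finset.mem_filter.mpr ⟨Finset.mem_univ _, hrT, hcT⟩, hq⟩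
      have hterm : ∀ T' : Finset E,
          MvPolynomial.coeff (momo (Finset.univ \ T))
            (∏ e ∈ Finset.univ \ T', (MvPolynomial.X e : MvPolynomial E ℝ)) =
          if T' = T then (1:ℝ) else 0 := by
        intro T'
        rw [prod_X_eq, MvPolynomial.coeff_monomial]
        by_cases h' : T' = T
        · subst h'; simp
        · rw [if_neg, if_neg h']
          intro hmm
          have h2 := congrArg (fun s => Finset.univ \ s) (momo_inj hmm)
          exact h' (by simpa [Finset.sdiff_sdiff_eq_self (Finset.subset_univ _)] using h2)
      have h2 := congrArg (MvPolynomial.coeff (momo (Finset.univ \ T))) h0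
      rw [MvPolynomial.coeff_sum, MvPolynomial.coeff_zero,
        Finset.sum_congr rfl (fun T' _ => hterm T')] at h2
      rw [Finset.sum_ite_eq' _ T (fun _ => (1:ℝ)), if_pos hmem] at h2
      exact one_ne_zero h2
    · intro h
      have hempt : (Finset.univ.filter (fun T : Finset E =>
          grank ends T = grank ends Finset.univ ∧ T.card = grank ends Finset.univ)).filter
          (fun T => ¬ grank ends (T ∩ γ) = grank ends γ) = ∅ := by
        refine Finset.filter_eq_empty_iff.mpr ?_
        intro T hT
        rw [Finset.mem_filter] at hT
        exact not_not_intro (h T hT.2.1 hT.2.2)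
      rw [hempt, Finset.sum_empty]
end

section
/- Let f(t) = ∑_{m∈A} a_m t^m be a Laurent polynomial in n variables with all coefficients a_m real and strictly positive, and suppose the Newton polytope P(f) = Conv(A) is contained in a hyperplane {m : ⟨m,u⟩ = d} for some nonzero u ∈ ℤ^n. Then for every s ∈ ℂ^n and c ∈ ℂ the integral ∫_{(0,∞)^n} |t^s f(t)^{−c}| dt/t diverges. -/
open MeasureTheory

/-- A positive function on `ℝⁿ` that transforms by a fixed factor under translation by a
nonzero vector cannot be integrable. -/
lemma aux_not_integrable_of_translation_scale {n : ℕ}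
    (h : (Fin n → ℝ) → ℝ) (hpos : ∀ x, 0 < h x)
    (v : Fin n → ℝ) (hv : v ≠ 0) (κ : ℝ)
    (htr : ∀ x, h (x + v) = Real.exp κ * h x) :
    ¬ Integrable h (volume : Measure (Fin n → ℝ)) := by
  intro hint
  -- the total integral is positive
  have hnn : 0 ≤ᵐ[(volume : Measure (Fin n → ℝ))] h :=
    Filter.Eventually.of_forall fun x => (hpos x).le
  have hIpos : 0 < ∫ x, h x := by
    rw [integral_pos_iff_support_of_nonneg_ae hnn hint]
    have hsupp : Function.support h = Set.univ :=
      Set.eq_univ_of_forall fun x => (hpos x).ne'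
    rw [hsupp]
    exact isOpen_univ.measure_pos volume ⟨0, trivial⟩
  -- the scaling factor must be 1, i.e. κ = 0
  have hκ : κ = 0 := by
    have key : ∫ x, h x = Real.exp κ * ∫ x, h x := by
      calc ∫ x, h x = ∫ x, h (x + v) := (integral_add_right_eq_self h v).symm
        _ = ∫ x, Real.exp κ * h x := by simp_rw [htr]
        _ = Real.exp κ * ∫ x, h x := integral_const_mul _ _
    have : Real.exp κ = 1 := by
      have := mul_right_cancel₀ hIpos.ne' (by linarith [key] : Real.exp κ * ∫ x, h x = 1 * ∫ x, h x)
      linarith [this]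
    rwa [Real.exp_eq_one_iff] at this
  -- hence h is periodic with period v
  have hper : ∀ x, h (x + v) = h x := by
    intro x; rw [htr x, hκ, Real.exp_zero, one_mul]
  subst hκ
  -- slab decomposition
  obtain ⟨i0, hi0⟩ : ∃ i, v i ≠ 0 := by
    by_contra hc; push_neg at hc; exact hv (funext hc)
  set ψ : (Fin n → ℝ) → ℝ := fun x => ∑ i, x i * v i with hψ
  set r : ℝ := ∑ i, v i * v i with hr
  have hrpos : 0 < r := by
    apply Finset.sum_pos' (fun i _ => mul_self_nonneg (v i))
    exact ⟨i0, Finset.mem_univ i0, mul_self_pos.mpr hi0⟩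
  have hψcont : Continuous ψ :=
    continuous_finset_sum _ fun i _ => (continuous_apply i).mul continuous_const
  have hψadd : ∀ x, ψ (x + v) = ψ x + r := by
    intro x
    simp only [hψ, hr, Pi.add_apply, add_mul, Finset.sum_add_distrib]
  have hψnsmul : ∀ (k : ℕ) x, ψ (x + k • v) = ψ x + k * r := by
    intro k
    induction k with
    | zero => simp
    | succ k ih =>
      intro x
      have : x + (k + 1) • v = (x + k • v) + v := by
        rw [succ_nsmul, ← add_assoc]
      rw [this, hψadd, ih x]
      push_cast; ring
  have hhnsmul : ∀ (k : ℕ) x, h (x + k • v) = h x := by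
    intro k
    induction k with
    | zero => simp
    | succ k ih =>
      intro x
      have : x + (k + 1) • v = (x + k • v) + v := by
        rw [succ_nsmul, ← add_assoc]
      rw [this, hper, ih x]
  set S : ℕ → Set (Fin n → ℝ) := fun k => ψ ⁻¹' (Set.Ico (k * r) (k * r + r)) with hS
  have hSmeas : ∀ k, MeasurableSet (S k) := fun k =>
    hψcont.measurable measurableSet_Ico
  have hmem : ∀ (k : ℕ) x, x ∈ S 0 ↔ x + k • v ∈ S k := by
    intro k x
    simp only [hS, Set.mem_preimage, Set.mem_Ico, hψnsmul]
    constructor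
    · rintro ⟨h1, h2⟩
      constructor <;> push_cast at h1 h2 ⊢ <;> linarith
    · rintro ⟨h1, h2⟩
      constructor <;> push_cast at h1 h2 ⊢ <;> linarith
  -- all slab integrals agree
  have hSk : ∀ k : ℕ, ∫ x in S k, h x = ∫ x in S 0, h x := by
    intro k
    rw [← integral_indicator (hSmeas k), ← integral_indicator (hSmeas 0)]
    calc ∫ x, (S k).indicator h x
        = ∫ x, (S k).indicator h (x + k • v) :=
          (integral_add_right_eq_self ((S k).indicator h) (k • v)).symm
      _ = ∫ x, (S 0).indicator h x := by
          congr 1; funext x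
          by_cases hx : x ∈ S 0
          · rw [Set.indicator_of_mem ((hmem k x).mp hx), Set.indicator_of_mem hx, hhnsmul]
          · rw [Set.indicator_of_notMem (fun hxx => hx ((hmem k x).mpr hxx)),
              Set.indicator_of_notMem hx]
  -- the base slab integral is positive
  set C : ℝ := ∫ x in S 0, h x with hC
  have hCpos : 0 < C := by
    rw [hC, setIntegral_pos_iff_support_of_nonneg_ae
      (Filter.Eventually.of_forall fun x => (hpos x).le) (hint.integrableOn)]
    have hsupp : Function.support h = Set.univ :=
      Set.eq_univ_of_forall fun x => (hpos x).ne'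
    rw [hsupp, Set.univ_inter]
    have hopen : IsOpen (ψ ⁻¹' Set.Ioo 0 r) := isOpen_Ioo.preimage hψcont
    have hne : (ψ ⁻¹' Set.Ioo 0 r).Nonempty := by
      refine ⟨(1 / 2 : ℝ) • v, ?_⟩
      simp only [Set.mem_preimage, hψ, Pi.smul_apply, smul_eq_mul, Set.mem_Ioo]
      have : ∑ i, 1 / 2 * v i * v i = 1 / 2 * r := by
        rw [hr, Finset.mul_sum]; congr 1; funext i; ring
      rw [this]
      constructor <;> linarith
    have hsub : ψ ⁻¹' Set.Ioo 0 r ⊆ S 0 := by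
      intro x hx
      simp only [Set.mem_preimage, Set.mem_Ioo] at hx
      simp only [hS, Set.mem_preimage, Set.mem_Ico]
      push_cast
      constructor <;> linarith [hx.1, hx.2]
    exact lt_of_lt_of_le (hopen.measure_pos volume hne) (measure_mono hsub)
  -- for every N, N * C ≤ ∫ h
  have hbound : ∀ N : ℕ, (N : ℝ) * C ≤ ∫ x, h x := by
    intro N
    have hdisj : (↑(Finset.range N) : Set ℕ).Pairwise (Function.onFun Disjoint S) := by
      intro j _ k _ hjk
      refine Set.disjoint_left.mpr fun x hxj hxk => hjk ?_
      simp only [hS, Set.mem_preimage, Set.mem_Ico] at hxj hxk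
      have h1 : (j : ℝ) < k + 1 := by
        nlinarith [hxj.1, hxj.2, hxk.1, hxk.2, hrpos]
      have h2 : (k : ℝ) < j + 1 := by
        nlinarith [hxj.1, hxj.2, hxk.1, hxk.2, hrpos]
      have : j < k + 1 := by exact_mod_cast h1
      have : k < j + 1 := by exact_mod_cast h2
      omega
    have hsum : ∑ k ∈ Finset.range N, ∫ x in S k, h x
        = ∫ x in ⋃ k ∈ Finset.range N, S k, h x :=
      (integral_biUnion_finset (Finset.range N) (fun k _ => hSmeas k) hdisj
        (fun k _ => hint.integrableOn)).symm
    have hle : ∫ x in ⋃ k ∈ Finset.range N, S k, h x ≤ ∫ x, h x :=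
      setIntegral_le_integral hint hnn
    calc (N : ℝ) * C = ∑ k ∈ Finset.range N, ∫ x in S k, h x := by
          simp [hSk, Finset.sum_const, nsmul_eq_mul]
      _ ≤ ∫ x, h x := hsum ▸ hle
  obtain ⟨N, hN⟩ := exists_nat_gt ((∫ x, h x) / C)
  have := hbound N
  rw [div_lt_iff₀ hCpos] at hN
  linarith

/-- Let `f(t) = ∑_{m ∈ A} a_m t^m` be a Laurent polynomial in `n` variables
with strictly positive real coefficients whose Newton polytope lies in an affine hyperplane
`{m : ⟨m, u⟩ = d}` for some `0 ≠ u ∈ ℤ^n`.  Then for every `s ∈ ℂ^n` and `c ∈ ℂ` the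
Mellin integrand `t^s f(t)^{-c} / ∏ tᵢ` is not (absolutely) integrable on `(0,∞)^n`,
i.e. `∫_{(0,∞)^n} |t^s f(t)^{-c}| dt/t` diverges. -/
theorem mellin_divergent_of_degenerate_newton_polytope
    (n : ℕ) (A : Finset (Fin n → ℤ)) (hA : A.Nonempty)
    (a : (Fin n → ℤ) → ℝ) (hapos : ∀ m ∈ A, 0 < a m)
    (u : Fin n → ℤ) (hu : u ≠ 0) (d : ℤ)
    (hdeg : ∀ m ∈ A, ∑ i, m i * u i = d) :
    ∀ (s : Fin n → ℂ) (c : ℂ),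
      ¬ IntegrableOn
          (fun t : Fin n → ℝ =>
            (∏ i, (t i : ℂ) ^ (s i)) *
              ((↑(∑ m ∈ A, a m * ∏ i, t i ^ (m i)) : ℂ) ^ (-c)) *
              (↑(∏ i, (t i)⁻¹) : ℂ))
          {t : Fin n → ℝ | ∀ i, 0 < t i} volume := by
  intro s c hint
  classical
  -- the exponential change of variables
  set E : (Fin n → ℝ) → (Fin n → ℝ) := fun x i => Real.exp (x i) with hE
  set D : (Fin n → ℝ) → ((Fin n → ℝ) →L[ℝ] (Fin n → ℝ)) := fun x =>
    ContinuousLinearMap.pi (fun i => Real.exp (x i) • ContinuousLinearMap.proj i) with hD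
  have hDeriv : ∀ x, HasFDerivAt E (D x) x := by
    intro x
    apply hasFDerivAt_pi.2
    intro i
    exact (Real.hasDerivAt_exp (x i)).comp_hasFDerivAt x (hasFDerivAt_apply (𝕜 := ℝ) i x)
  have hdet : ∀ x, (D x).det = ∏ i, Real.exp (x i) := by
    intro x
    have hM : LinearMap.toMatrix (Pi.basisFun ℝ (Fin n)) (Pi.basisFun ℝ (Fin n))
        ((D x) : (Fin n → ℝ) →ₗ[ℝ] (Fin n → ℝ)) = Matrix.diagonal fun i => Real.exp (x i) := by
      ext i j
      simp only [LinearMap.toMatrix_apply, Pi.basisFun_apply, Pi.basisFun_repr,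
        ContinuousLinearMap.coe_coe, hD, ContinuousLinearMap.pi_apply,
        ContinuousLinearMap.smul_apply, ContinuousLinearMap.proj_apply,
        Matrix.diagonal_apply, Pi.single_apply]
      by_cases h : i = j <;> simp [h, eq_comm]
    show LinearMap.det ((D x) : (Fin n → ℝ) →ₗ[ℝ] (Fin n → ℝ)) = _
    rw [← LinearMap.det_toMatrix (Pi.basisFun ℝ (Fin n)), hM, Matrix.det_diagonal]
  have hinj : Set.InjOn E Set.univ := fun x _ y _ hxy =>
    funext fun i => Real.exp_injective (congrFun hxy i)
  have himg : E '' Set.univ = {t : Fin n → ℝ | ∀ i, 0 < t i} := by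
    ext t
    constructor
    · rintro ⟨x, -, rfl⟩
      exact fun i => Real.exp_pos _
    · intro ht
      exact ⟨fun i => Real.log (t i), trivial, funext fun i => Real.exp_log (ht i)⟩
  rw [← himg, integrableOn_image_iff_integrableOn_abs_det_fderiv_smul volume
    MeasurableSet.univ (fun x _ => (hDeriv x).hasFDerivWithinAt) hinj] at hint
  rw [integrableOn_univ] at hint
  have hnorm := hint.norm
  -- the real-valued integrand in logarithmic coordinates
  set F : (Fin n → ℝ) → ℝ := fun x => ∑ m ∈ A, a m * Real.exp (∑ i, (m i : ℝ) * x i) with hF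
  have hFpos : ∀ x, 0 < F x :=
    fun x => Finset.sum_pos (fun m hm => mul_pos (hapos m hm) (Real.exp_pos _)) hA
  set h : (Fin n → ℝ) → ℝ := fun x =>
    Real.exp ((∑ i, (s i).re * x i) - c.re * Real.log (F x)) with hh
  have hexpz : ∀ (t : ℝ) (k : ℤ), Real.exp t ^ k = Real.exp ((k : ℝ) * t) := by
    intro t k
    rw [← Real.rpow_intCast (Real.exp t) k, Real.rpow_def_of_pos (Real.exp_pos t),
      Real.log_exp, mul_comm]
  have hFeq : ∀ x, (∑ m ∈ A, a m * ∏ i, (E x i) ^ (m i)) = F x := by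
    intro x
    refine Finset.sum_congr rfl fun m hm => ?_
    congr 1
    rw [Real.exp_sum]
    exact Finset.prod_congr rfl fun i _ => hexpz (x i) (m i)
  have hnormeq : (fun x => ‖|(D x).det| • ((∏ i, (E x i : ℂ) ^ (s i)) *
        ((↑(∑ m ∈ A, a m * ∏ i, (E x i) ^ (m i)) : ℂ) ^ (-c)) *
        (↑(∏ i, (E x i)⁻¹) : ℂ))‖) = h := by
    funext x
    rw [norm_smul, norm_mul, norm_mul]
    have e1 : ‖(|(D x).det| : ℝ)‖ = ∏ i, Real.exp (x i) := by
      rw [Real.norm_eq_abs, abs_abs, hdet, abs_of_pos (Finset.prod_pos fun i _ => Real.exp_pos _)]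
    have e2 : ‖∏ i, (E x i : ℂ) ^ (s i)‖ = Real.exp (∑ i, (s i).re * x i) := by
      rw [norm_prod, Real.exp_sum]
      refine Finset.prod_congr rfl fun i _ => ?_
      rw [Complex.norm_cpow_eq_rpow_re_of_pos (Real.exp_pos _),
        Real.rpow_def_of_pos (Real.exp_pos _), Real.log_exp, mul_comm]
    have e3 : ‖((↑(∑ m ∈ A, a m * ∏ i, (E x i) ^ (m i)) : ℂ) ^ (-c))‖
        = Real.exp (-(c.re) * Real.log (F x)) := by
      rw [hFeq,
        Complex.norm_cpow_eq_rpow_re_of_pos (hFpos x), Complex.neg_re,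
        Real.rpow_def_of_pos (hFpos x), mul_comm]
    have e4 : ‖(↑(∏ i, (E x i)⁻¹) : ℂ)‖ = (∏ i, Real.exp (x i))⁻¹ := by
      rw [Complex.norm_real, Real.norm_eq_abs, ← Finset.prod_inv_distrib,
        abs_of_pos (Finset.prod_pos fun i _ => inv_pos.mpr (Real.exp_pos _))]
    rw [e1, e2, e3, e4]
    have hP : (0:ℝ) < ∏ i, Real.exp (x i) := Finset.prod_pos fun i _ => Real.exp_pos _
    have hsplit : (∑ i, (s i).re * x i) - c.re * Real.log (F x)
        = (∑ i, (s i).re * x i) + (-c.re * Real.log (F x)) := by ring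
    simp only [hh]
    rw [hsplit, Real.exp_add]
    field_simp
  have hIntegrable : Integrable h (volume : Measure (Fin n → ℝ)) := by
    refine hnorm.congr (Filter.Eventually.of_forall fun x => ?_)
    exact congrFun hnormeq x
  -- apply the translation-scaling lemma
  set v : Fin n → ℝ := fun i => (u i : ℝ) with hv
  have hvne : v ≠ 0 := by
    intro hc
    apply hu
    funext i
    have h0 : (u i : ℝ) = 0 := by simpa [hv] using congrFun hc i
    simp only [Pi.zero_apply]
    exact_mod_cast h0
  set κ : ℝ := (∑ i, (s i).re * (u i : ℝ)) - c.re * (d : ℝ) with hκ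
  have htr : ∀ x, h (x + v) = Real.exp κ * h x := by
    intro x
    have hFtr : F (x + v) = Real.exp (d : ℝ) * F x := by
      rw [hF, Finset.mul_sum]
      refine Finset.sum_congr rfl fun m hm => ?_
      have hd : ∑ i, (m i : ℝ) * v i = (d : ℝ) := by
        have h1 : ((∑ i, m i * u i : ℤ) : ℝ) = (d : ℝ) := by rw [hdeg m hm]
        push_cast at h1
        simpa [hv] using h1
      have hsum : ∑ i, (m i : ℝ) * ((x + v) i) = (∑ i, (m i : ℝ) * x i) + (d : ℝ) := by
        simp only [Pi.add_apply, mul_add, Finset.sum_add_distrib, hd]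
      rw [hsum, Real.exp_add]
      ring
    have hlog : Real.log (F (x + v)) = (d : ℝ) + Real.log (F x) := by
      rw [hFtr, Real.log_mul (Real.exp_ne_zero _) (hFpos x).ne', Real.log_exp]
    have hlin : ∑ i, (s i).re * ((x + v) i)
        = (∑ i, (s i).re * x i) + ∑ i, (s i).re * (u i : ℝ) := by
      simp only [Pi.add_apply, mul_add, Finset.sum_add_distrib, hv]
    simp only [hh]
    rw [← Real.exp_add]
    congr 1
    rw [hlin, hlog, hκ]
    ring
  exact aux_not_integrable_of_translation_scale h (fun x => Real.exp_pos _) v hvne κ htr hIntegrable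
end
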